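/- Let c_n denote the number of closable Motzkin trees with exactly n nodes and m_n the number of all Motzkin trees with exactly n nodes. Then c_0 = 0, c_1 = 0, and for every n ≥ 2, c_n = m_{n-1} + Σ_{i+j=n-1, i≥1, j≥1} c_i · c_j. -/

import Mathlib

/-- Motzkin trees (binary-unary trees): leaf `v`, unary `l`, binary `a`. -/
inductive Mot : Type
  | v : Mot
  | l : Mot → Mot
  | a : Mot → Mot → Mot
deriving DecidableEq

/-- Lambda terms in de Bruijn form. -/
inductive Lam : Type
  | v : Nat → Lam
  | l : Lam → Lam
  | a : Lam → Lam → Lam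
deriving DecidableEq

/-- `t` is closed at depth `d`. -/
def Lam.closedAt : Lam → Nat → Prop
  | .v i, d => i < d
  | .l t, d => t.closedAt (d + 1)
  | .a s t, d => s.closedAt d ∧ t.closedAt d

/-- The Motzkin-tree skeleton of a de Bruijn term. -/
def Lam.skel : Lam → Mot
  | .v _ => .v
  | .l t => .l t.skel
  | .a s t => .a s.skel t.skel

/-- Total node count of a Motzkin tree. -/
def Mot.nodes : Mot → ℕ
  | .v => 1
  | .l t => 1 + t.nodes
  | .a s t => 1 + s.nodes + t.nodes

/-- A Motzkin tree is closable if it is the skeleton of at least one closed term. -/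
def Mot.Closable (X : Mot) : Prop := ∃ t : Lam, t.closedAt 0 ∧ t.skel = X

/-- `m n` is the number of Motzkin trees with exactly `n` nodes. -/
noncomputable def m (n : ℕ) : ℕ := Nat.card {t : Mot // t.nodes = n}

/-- `c n` is the number of closable Motzkin trees with exactly `n` nodes. -/
noncomputable def c (n : ℕ) : ℕ := Nat.card {t : Mot // t.nodes = n ∧ t.Closable}

/-! ### Auxiliary lemmas -/

lemma Mot.nodes_pos (t : Mot) : 0 < t.nodes := by
  cases t <;> simp only [Mot.nodes] <;> omega

/-- Fill a Motzkin tree with de Bruijn index 0 everywhere. -/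
def fill : Mot → Lam
  | .v => .v 0
  | .l t => .l (fill t)
  | .a s t => .a (fill s) (fill t)

lemma fill_closed (t : Mot) : ∀ d : ℕ, (fill t).closedAt (d + 1) := by
  induction t with
  | v => intro d; simp [fill, Lam.closedAt]
  | l t ih => intro d; exact ih (d + 1)
  | a s t ihs iht => intro d; exact ⟨ihs d, iht d⟩

lemma fill_skel (t : Mot) : (fill t).skel = t := by
  induction t <;> simp [fill, Lam.skel, *]

lemma closable_l (t : Mot) : (Mot.l t).Closable :=
  ⟨.l (fill t), fill_closed t 0, by simp [Lam.skel, fill_skel]⟩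

lemma not_closable_v : ¬ Mot.v.Closable := by
  rintro ⟨t, hc, hs⟩
  cases t with
  | v i => simp [Lam.closedAt] at hc
  | l t => simp [Lam.skel] at hs
  | a s t => simp [Lam.skel] at hs

lemma closable_a_iff (s t : Mot) :
    (Mot.a s t).Closable ↔ s.Closable ∧ t.Closable := by
  constructor
  · rintro ⟨u, hc, hs⟩
    cases u with
    | v i => simp [Lam.skel] at hs
    | l u => simp [Lam.skel] at hs
    | a u1 u2 =>
      simp only [Lam.skel, Mot.a.injEq] at hs
      exact ⟨⟨u1, hc.1, hs.1⟩, ⟨u2, hc.2, hs.2⟩⟩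
  · rintro ⟨⟨u1, h1, hs1⟩, ⟨u2, h2, hs2⟩⟩
    exact ⟨.a u1 u2, ⟨h1, h2⟩, by simp [Lam.skel, hs1, hs2]⟩

lemma finite_le (n : ℕ) : {t : Mot | t.nodes ≤ n}.Finite := by
  induction n with
  | zero =>
    convert Set.finite_empty
    ext t
    simpa using (Mot.nodes_pos t).ne'
  | succ n ih =>
    have hfin : ({Mot.v} ∪ (Mot.l '' {t | t.nodes ≤ n}) ∪
        Set.image2 Mot.a {t : Mot | t.nodes ≤ n} {t : Mot | t.nodes ≤ n}).Finite :=
      ((Set.finite_singleton _).union (ih.image _)).union (ih.image2 _ ih)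
    refine hfin.subset ?_
    intro t ht
    cases t with
    | v => simp
    | l s =>
      simp only [Mot.nodes, Set.mem_setOf_eq] at ht
      exact Or.inl (Or.inr ⟨s, by simpa using by omega, rfl⟩)
    | a s u =>
      simp only [Mot.nodes, Set.mem_setOf_eq] at ht
      have hs := Mot.nodes_pos s
      have hu := Mot.nodes_pos u
      exact Or.inr ⟨s, by simp only [Set.mem_setOf_eq]; omega,
        u, by simp only [Set.mem_setOf_eq]; omega, rfl⟩

lemma finite_eq (n : ℕ) : {t : Mot | t.nodes = n}.Finite :=
  (finite_le n).subset (fun _ ht => le_of_eq ht)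

lemma finite_closable (n : ℕ) : {t : Mot | t.nodes = n ∧ t.Closable}.Finite :=
  (finite_eq n).subset (fun _ ht => ht.1)

noncomputable def Fn (n : ℕ) : Finset Mot := (finite_eq n).toFinset
noncomputable def Cn (n : ℕ) : Finset Mot := (finite_closable n).toFinset

lemma mem_Fn {n : ℕ} {t : Mot} : t ∈ Fn n ↔ t.nodes = n := by
  simp [Fn]

lemma mem_Cn {n : ℕ} {t : Mot} : t ∈ Cn n ↔ t.nodes = n ∧ t.Closable := by
  simp [Cn]

lemma m_eq (n : ℕ) : m n = (Fn n).card := by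
  rw [m, Fn]
  have : {t : Mot // t.nodes = n} = ↥{t : Mot | t.nodes = n} := rfl
  rw [this, Nat.card_coe_set_eq, Set.ncard_eq_toFinset_card _ (finite_eq n)]

lemma c_eq (n : ℕ) : c n = (Cn n).card := by
  rw [c, Cn]
  have : {t : Mot // t.nodes = n ∧ t.Closable} = ↥{t : Mot | t.nodes = n ∧ t.Closable} := rfl
  rw [this, Nat.card_coe_set_eq, Set.ncard_eq_toFinset_card _ (finite_closable n)]

lemma c_zero : c 0 = 0 := by
  rw [c_eq]
  convert Finset.card_empty
  ext t
  simp only [mem_Cn, Finset.notMem_empty, iff_false, not_and]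
  intro h
  exact absurd h (Mot.nodes_pos t).ne'

lemma c_one : c 1 = 0 := by
  rw [c_eq]
  convert Finset.card_empty
  ext t
  simp only [mem_Cn, Finset.notMem_empty, iff_false, not_and]
  cases t with
  | v => intro _; exact not_closable_v
  | l s => simp only [Mot.nodes]; have := Mot.nodes_pos s; omega
  | a s u => simp only [Mot.nodes]; have := Mot.nodes_pos s; omega

lemma Cn_eq (n : ℕ) (hn : 2 ≤ n) :
    Cn n = (Fn (n - 1)).image Mot.l ∪
      (Finset.HasAntidiagonal.antidiagonal (n - 1)).biUnion
        (fun p => ((Cn p.1) ×ˢ (Cn p.2)).image fun q => Mot.a q.1 q.2) := by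
  ext t
  simp only [Finset.mem_union, Finset.mem_image, Finset.mem_biUnion, Finset.mem_product,
    mem_Fn, mem_Cn, Finset.HasAntidiagonal.mem_antidiagonal, Prod.exists]
  cases t with
  | v =>
    simp only [Mot.nodes]
    constructor
    · rintro ⟨_, h⟩; exact absurd h not_closable_v
    · rintro (⟨s, _, h⟩ | ⟨i, j, _, s, u, _, h⟩) <;> exact absurd h (by simp)
  | l s =>
    simp only [Mot.nodes]
    constructor
    · rintro ⟨hnn, _⟩
      exact Or.inl ⟨s, by omega, rfl⟩
    · rintro (⟨u, hu, h⟩ | ⟨i, j, _, u, w, _, h⟩)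
      · obtain rfl : u = s := by injection h
        exact ⟨by omega, closable_l _⟩
      · exact absurd h (by simp)
  | a s u =>
    simp only [Mot.nodes, closable_a_iff]
    constructor
    · rintro ⟨hnn, hs, hu⟩
      exact Or.inr ⟨s.nodes, u.nodes, by omega, s, u, ⟨⟨rfl, hs⟩, rfl, hu⟩, rfl⟩
    · rintro (⟨w, _, h⟩ | ⟨i, j, hij, w, x, ⟨⟨hw, hwc⟩, hx, hxc⟩, h⟩)
      · exact absurd h (by simp)
      · obtain ⟨rfl, rfl⟩ : w = s ∧ x = u := by
          constructor <;> injection h <;> assumption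
        exact ⟨by omega, hwc, hxc⟩

lemma card_Cn (n : ℕ) (hn : 2 ≤ n) :
    (Cn n).card = (Fn (n - 1)).card +
      ∑ p ∈ Finset.HasAntidiagonal.antidiagonal (n - 1), (Cn p.1).card * (Cn p.2).card := by
  rw [Cn_eq n hn]
  rw [Finset.card_union_of_disjoint]
  · congr 1
    · exact Finset.card_image_of_injective _ (fun a b h => by injection h)
    · rw [Finset.card_biUnion]
      · refine Finset.sum_congr rfl fun p _ => ?_
        rw [Finset.card_image_of_injective, Finset.card_product]
        intro q r h
        cases q; cases r
        simpa [Prod.ext_iff] using (by injection h; constructor <;> assumption :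
          _ ∧ _)
      · intro p hp q hq hpq
        simp only [Finset.disjoint_left]
        intro t ht ht'
        simp only [Finset.mem_image, Finset.mem_product, mem_Cn, Prod.exists] at ht ht'
        obtain ⟨s, u, ⟨⟨hs, _⟩, hu, _⟩, rfl⟩ := ht
        obtain ⟨s', u', ⟨⟨hs', _⟩, hu', _⟩, h⟩ := ht'
        obtain ⟨rfl, rfl⟩ : s' = s ∧ u' = u := by
          constructor <;> injection h <;> assumption
        exact hpq (Prod.ext (hs.symm.trans hs') (hu.symm.trans hu'))
  · simp only [Finset.disjoint_left]
    intro t ht ht'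
    simp only [Finset.mem_image, Finset.mem_biUnion, Finset.mem_product, Prod.exists] at ht ht'
    obtain ⟨s, _, rfl⟩ := ht
    obtain ⟨i, j, _, s', u', _, h⟩ := ht'
    exact absurd h (by simp)

theorem stmt7 :
    c 0 = 0 ∧ c 1 = 0 ∧
    ∀ n : ℕ, 2 ≤ n →
      c n = m (n - 1) +
        ∑ p ∈ (Finset.HasAntidiagonal.antidiagonal (n - 1)).filter (fun p => 1 ≤ p.1 ∧ 1 ≤ p.2),
          c p.1 * c p.2 := by
  refine ⟨c_zero, c_one, fun n hn => ?_⟩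
  have hfull : ∑ p ∈ (Finset.HasAntidiagonal.antidiagonal (n - 1)).filter (fun p => 1 ≤ p.1 ∧ 1 ≤ p.2),
      c p.1 * c p.2 = ∑ p ∈ Finset.HasAntidiagonal.antidiagonal (n - 1), c p.1 * c p.2 := by
    refine Finset.sum_filter_of_ne fun p _ hne => ?_
    have h1 : p.1 ≠ 0 := fun h => hne (by rw [h, c_zero, zero_mul])
    have h2 : p.2 ≠ 0 := fun h => hne (by rw [h, c_zero, mul_zero])
    exact ⟨Nat.one_le_iff_ne_zero.mpr h1, Nat.one_le_iff_ne_zero.mpr h2⟩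
  rw [hfull, c_eq, card_Cn n hn, m_eq]
  congr 1
  exact Finset.sum_congr rfl fun p _ => by rw [c_eq, c_eq]
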